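/- Let S be a complete separable metric space, let c : S × S → [0,∞], let L ∈ (0,∞), and define Lip_b^L(S,c) = {g ∈ C_b(S) : |g(x) − g(y)| ≤ L·c(x,y) for all x,y ∈ S} and Lip^L(S,c) = {g ∈ C(S) : |g(x) − g(y)| ≤ L·c(x,y) for all x,y ∈ S}. Let f ∈ F₁(a,b) be admissible with f* bounded below. Then for all Borel probability measures Q, P on S: D_f^{Lip_b^L(S,c)}(Q‖P) = sup over g ∈ Lip^L(S,c) ∩ L¹(Q) of {E_Q[g] − Λ_f^P[g]}. -/

import Mathlib

open MeasureTheory Filter Set Topology ENNReal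
open scoped Classical

noncomputable section

/-- The set of bounded measurable real-valued functions on `Ω`. -/
def Mb (Ω : Type*) [MeasurableSpace Ω] : Set (Ω → ℝ) :=
  {g | Measurable g ∧ ∃ C : ℝ, ∀ x, |g x| ≤ C}

/-- The set of bounded continuous real-valued functions on `S`. -/
def Cb (S : Type*) [TopologicalSpace S] : Set (S → ℝ) :=
  {g | Continuous g ∧ ∃ C : ℝ, ∀ x, |g x| ≤ C}

/-- The positive part of an extended real number, as an element of `ℝ≥0∞`. -/
def posE (x : EReal) : ℝ≥0∞ := if x = ⊤ then ⊤ else ENNReal.ofReal x.toReal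

/-- The extended-real-valued integral of an `EReal`-valued function, defined as the
difference of the lower integrals of the positive and negative parts, with the
convention `∞ - ∞ = -∞`. -/
def eIntegral {Ω : Type*} [MeasurableSpace Ω] (P : Measure Ω) (h : Ω → EReal) : EReal :=
  ((∫⁻ x, posE (h x) ∂P : ℝ≥0∞) : EReal) - ((∫⁻ x, posE (-(h x)) ∂P : ℝ≥0∞) : EReal)

/-- The Legendre transform `f*(y) = sup_x {x*y - f(x)}` of `f : ℝ → (-∞,∞]`. -/
def fstar (f : ℝ → EReal) (y : ℝ) : EReal := ⨆ x : ℝ, (((x * y : ℝ) : EReal) - f x)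

/-- `f : ℝ → (-∞,∞]` is (the convex LSC extension of) an element of `F₁(a,b)`:
convex, lower semicontinuous, never `-∞`, finite exactly on the interval `(a,b)`
(with `+∞` strictly outside `[a,b]`), and `f(1) = 0` with `a < 1 < b`. -/
structure IsF1 (a b : EReal) (f : ℝ → EReal) : Prop where
  a_lt_one : a < ((1 : ℝ) : EReal)
  one_lt_b : ((1 : ℝ) : EReal) < b
  convex : ∀ x y t : ℝ, 0 < t → t < 1 →
    f (t * x + (1 - t) * y) ≤ ((t : ℝ) : EReal) * f x + (((1 - t : ℝ)) : EReal) * f y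
  lsc : LowerSemicontinuous f
  ne_bot : ∀ x, f x ≠ ⊥
  finite_on : ∀ x : ℝ, a < (x : EReal) → (x : EReal) < b → f x ≠ ⊤
  top_outside : ∀ x : ℝ, ((x : EReal) < a ∨ b < (x : EReal)) → f x = ⊤
  at_one : f 1 = 0

/-- `Λ_f^P[g] = inf_{ν ∈ ℝ} {ν + E_P[f*(g - ν)]}`. -/
def LambdaF {Ω : Type*} [MeasurableSpace Ω] (f : ℝ → EReal) (P : Measure Ω) (g : Ω → ℝ) :
    EReal :=
  ⨅ ν : ℝ, ((ν : EReal) + eIntegral P (fun x => fstar f (g x - ν)))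

/-- The classical `f`-divergence `D_f(Q‖P) = E_P[f(dQ/dP)]` if `Q ≪ P`, else `∞`. -/
def fDivE {Ω : Type*} [MeasurableSpace Ω] (f : ℝ → EReal) (Q P : Measure Ω) : EReal :=
  if Q ≪ P then eIntegral P (fun x => f ((Q.rnDeriv P x).toReal)) else ⊤

/-- The `(f,Γ)`-divergence `D_f^Γ(Q‖P) = sup_{g ∈ Γ} {E_Q[g] - Λ_f^P[g]}`. -/
def fGammaDiv {Ω : Type*} [MeasurableSpace Ω] (f : ℝ → EReal) (Γ : Set (Ω → ℝ))
    (Q P : Measure Ω) : EReal :=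
  ⨆ g ∈ Γ, (((∫ x, g x ∂Q : ℝ) : EReal) - LambdaF f P g)

/-- The `Γ`-IPM `W^Γ(Q,P) = sup_{g ∈ Γ} {E_Q[g] - E_P[g]}`. -/
def ipmW {Ω : Type*} [MeasurableSpace Ω] (Γ : Set (Ω → ℝ)) (Q P : Measure Ω) : EReal :=
  ⨆ g ∈ Γ, (((∫ x, g x ∂Q : ℝ) : EReal) - ((∫ x, g x ∂P : ℝ) : EReal))


/-- Integration of a function against a finite signed measure, via the Jordan
decomposition. -/
def signedIntegral {S : Type*} [MeasurableSpace S] (μ : MeasureTheory.SignedMeasure S)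
    (g : S → ℝ) : ℝ :=
  (∫ x, g x ∂μ.toJordanDecomposition.posPart) - ∫ x, g x ∂μ.toJordanDecomposition.negPart

/-- The weak topology on real-valued functions on `S` generated by the maps
`g ↦ ∫ g dμ` for all finite signed (Borel) measures `μ` on `S`. -/
def weakTop (S : Type*) [MeasurableSpace S] : TopologicalSpace (S → ℝ) :=
  ⨅ μ : MeasureTheory.SignedMeasure S,
    TopologicalSpace.induced (fun g => signedIntegral μ g) inferInstance

/-- A set `Ψ` of functions is `P(S)`-determining: if two probability measures give the
same integral to every `ψ ∈ Ψ`, then they are equal. -/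
def Determining {S : Type*} [MeasurableSpace S] (Ψ : Set (S → ℝ)) : Prop :=
  ∀ Q P : Measure S, IsProbabilityMeasure Q → IsProbabilityMeasure P →
    (∀ ψ ∈ Ψ, (∫ x, ψ x ∂Q) = ∫ x, ψ x ∂P) → Q = P

/-- `Γ ⊆ C_b(S)` is admissible: it contains `0`, is convex, and is closed in `C_b(S)` for
the weak topology generated by the finite signed measures. -/
def AdmissibleGamma {S : Type*} [TopologicalSpace S] [MeasurableSpace S]
    (Γ : Set (S → ℝ)) : Prop :=
  (fun _ => (0 : ℝ)) ∈ Γ ∧ Convex ℝ Γ ∧ Γ ⊆ Cb S ∧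
    ∀ g ∈ Cb S, g ∈ @closure _ (weakTop S) Γ → g ∈ Γ

/-- `Γ` is strictly admissible: there is a `P(S)`-determining set `Ψ ⊆ C_b(S)` such that
for all `ψ ∈ Ψ` there are `c ∈ ℝ` and `ε > 0` with `c ± εψ ∈ Γ`. -/
def StrictlyAdmissibleGamma {S : Type*} [TopologicalSpace S] [MeasurableSpace S]
    (Γ : Set (S → ℝ)) : Prop :=
  ∃ Ψ : Set (S → ℝ), Ψ ⊆ Cb S ∧ Determining Ψ ∧
    ∀ ψ ∈ Ψ, ∃ c ε : ℝ, 0 < ε ∧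
      (fun x => c + ε * ψ x) ∈ Γ ∧ (fun x => c - ε * ψ x) ∈ Γ

/-- `f` is admissible: `f*` is finite everywhere and `lim_{y → -∞} f*(y) < ∞`. -/
def AdmissibleF (f : ℝ → EReal) : Prop :=
  (∀ y : ℝ, fstar f y ≠ ⊤) ∧ ∃ M : ℝ, ∀ᶠ y in Filter.atBot, fstar f y ≤ (M : EReal)

/-- `f` is strictly convex at `1`: `f` is not affine on any neighborhood of `1`. -/
def StrictlyConvexAtOne (f : ℝ → EReal) : Prop :=
  ∀ ε : ℝ, 0 < ε → ¬ ∃ m q : ℝ, ∀ x : ℝ, |x - 1| < ε → f x = ((m * x + q : ℝ) : EReal)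

/-- `f` is strictly convex on the interval `(a,b)` (with `a, b ∈ [-∞,∞]`). -/
def StrictConvexOnAB (a b : EReal) (f : ℝ → EReal) : Prop :=
  ∀ x y t : ℝ, a < (x : EReal) → (x : EReal) < b → a < (y : EReal) → (y : EReal) < b →
    x ≠ y → 0 < t → t < 1 →
    f (t * x + (1 - t) * y) < ((t : ℝ) : EReal) * f x + (((1 - t : ℝ)) : EReal) * f y


/-- The bounded continuous functions that are `L`-Lipschitz with respect to the cost
`c : S × S → [0,∞]`. -/
def LipbL (S : Type*) [TopologicalSpace S] (c : S × S → ℝ≥0∞) (L : ℝ) : Set (S → ℝ) :=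
  {g | g ∈ Cb S ∧ ∀ x y : S, ENNReal.ofReal |g x - g y| ≤ ENNReal.ofReal L * c (x, y)}

/-- The (possibly unbounded) continuous functions that are `L`-Lipschitz with respect to
the cost `c : S × S → [0,∞]`. -/
def LipL (S : Type*) [TopologicalSpace S] (c : S × S → ℝ≥0∞) (L : ℝ) : Set (S → ℝ) :=
  {g | Continuous g ∧ ∀ x y : S, ENNReal.ofReal |g x - g y| ≤ ENNReal.ofReal L * c (x, y)}

end

section Aux

open MeasureTheory

lemma ereal_le_of_forall_lt_le {x y : EReal} (h : ∀ r : ℝ, (r : EReal) < x → (r : EReal) ≤ y) :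
    x ≤ y := by
  by_contra hc
  push_neg at hc
  obtain ⟨r, hr1, hr2⟩ := EReal.exists_between_coe_real hc
  exact absurd (h r hr2) (not_le.2 hr1)

lemma ereal_lt_sub_aux {Λ : EReal} {cq r : ℝ} (h : (r : EReal) < (cq : EReal) - Λ) :
    Λ < ((cq - r : ℝ) : EReal) := by
  induction Λ using EReal.rec with
  | bot => exact EReal.bot_lt_coe _
  | coe l =>
      rw [← EReal.coe_sub, EReal.coe_lt_coe_iff] at h
      exact_mod_cast (by linarith : l < cq - r)
  | top => simp [EReal.sub_top] at h

lemma posE_coe (r : ℝ) : posE ((r : ℝ) : EReal) = ENNReal.ofReal r := by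
  simp [posE]

lemma coe_ennreal_eq_coe_toReal {A : ℝ≥0∞} (hA : A ≠ ⊤) :
    (A : EReal) = ((A.toReal : ℝ) : EReal) := by
  conv_lhs => rw [← ENNReal.ofReal_toReal hA]
  rw [EReal.coe_ennreal_ofReal, max_eq_left ENNReal.toReal_nonneg]

lemma eIntegral_coe {Ω : Type*} [MeasurableSpace Ω] (P : Measure Ω) (ψ : Ω → ℝ)
    (h : Integrable ψ P) :
    eIntegral P (fun x => ((ψ x : ℝ) : EReal)) = ((∫ x, ψ x ∂P : ℝ) : EReal) := by
  have hA : (∫⁻ x, posE ((ψ x : ℝ) : EReal) ∂P) = ∫⁻ x, ENNReal.ofReal (ψ x) ∂P := by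
    simp only [posE_coe]
  have hB : (∫⁻ x, posE (-((ψ x : ℝ) : EReal)) ∂P) = ∫⁻ x, ENNReal.ofReal (-ψ x) ∂P := by
    simp only [← EReal.coe_neg, posE_coe]
  have hAfin : (∫⁻ x, ENNReal.ofReal (ψ x) ∂P) ≠ ⊤ := by
    refine ne_of_lt (lt_of_le_of_lt (lintegral_mono fun x => ?_) h.hasFiniteIntegral)
    rw [← ofReal_norm_eq_enorm, Real.norm_eq_abs]
    exact ENNReal.ofReal_le_ofReal (le_abs_self _)
  have hBfin : (∫⁻ x, ENNReal.ofReal (-ψ x) ∂P) ≠ ⊤ := by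
    refine ne_of_lt (lt_of_le_of_lt (lintegral_mono fun x => ?_) h.hasFiniteIntegral)
    rw [← ofReal_norm_eq_enorm, Real.norm_eq_abs]
    exact ENNReal.ofReal_le_ofReal (neg_le_abs _)
  rw [eIntegral, hA, hB, integral_eq_lintegral_pos_part_sub_lintegral_neg_part h,
    coe_ennreal_eq_coe_toReal hAfin, coe_ennreal_eq_coe_toReal hBfin, ← EReal.coe_sub]

lemma integrable_of_eIntegral_ne_top {Ω : Type*} [MeasurableSpace Ω] (P : Measure Ω)
    [IsProbabilityMeasure P] (ψ : Ω → ℝ) (hmeas : Measurable ψ) {m' : ℝ}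
    (hm : ∀ x, m' ≤ ψ x)
    (h : eIntegral P (fun x => ((ψ x : ℝ) : EReal)) ≠ ⊤) : Integrable ψ P := by
  have hB : (∫⁻ x, posE (-((ψ x : ℝ) : EReal)) ∂P) ≠ ⊤ := by
    have hle : ∀ x, posE (-((ψ x : ℝ) : EReal)) ≤ ENNReal.ofReal (-m') := by
      intro x
      rw [← EReal.coe_neg, posE_coe]
      exact ENNReal.ofReal_le_ofReal (by linarith [hm x])
    refine ne_of_lt (lt_of_le_of_lt (lintegral_mono hle) ?_)
    rw [lintegral_const]
    exact ENNReal.mul_lt_top ENNReal.ofReal_lt_top (measure_lt_top P _)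
  have hA : (∫⁻ x, posE ((ψ x : ℝ) : EReal) ∂P) ≠ ⊤ := by
    intro htop
    apply h
    rw [eIntegral, htop, coe_ennreal_eq_coe_toReal hB, EReal.coe_ennreal_top,
      EReal.top_sub_coe]
  simp only [posE_coe] at hA
  -- ψ - m' is nonnegative with finite ofReal-lintegral, hence integrable
  have hθ : Integrable (fun x => ψ x - m') P := by
    refine ⟨(hmeas.sub_const m').aestronglyMeasurable, ?_⟩
    rw [hasFiniteIntegral_iff_ofReal (Filter.Eventually.of_forall fun x => by simpa using sub_nonneg.2 (hm x))]
    calc (∫⁻ x, ENNReal.ofReal (ψ x - m') ∂P)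
        ≤ ∫⁻ x, ENNReal.ofReal (ψ x) + ENNReal.ofReal (-m') ∂P := by
          refine lintegral_mono fun x => ?_
          rw [sub_eq_add_neg]
          exact ENNReal.ofReal_add_le
      _ = (∫⁻ x, ENNReal.ofReal (ψ x) ∂P) + ENNReal.ofReal (-m') * P Set.univ := by
          rw [lintegral_add_right _ measurable_const, lintegral_const]
      _ < ⊤ := by
          exact ENNReal.add_lt_top.2 ⟨hA.lt_top,
            ENNReal.mul_lt_top ENNReal.ofReal_lt_top (measure_lt_top P _)⟩
  refine (hθ.add (integrable_const m')).congr (Filter.Eventually.of_forall fun x => ?_)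
  show ψ x - m' + m' = ψ x
  ring

end Aux

/-- For admissible `f` with `f*` bounded below, the `(f, Lip_b^L(S,c))`-
divergence is unchanged when the test functions are extended to all `Q`-integrable
(possibly unbounded) `L`-Lipschitz continuous functions:
`D_f^{Lip_b^L(S,c)}(Q‖P) = sup_{g ∈ Lip^L(S,c) ∩ L¹(Q)} {E_Q[g] - Λ_f^P[g]}`. -/
theorem stmt19 {S : Type*} [MetricSpace S] [CompleteSpace S]
    [TopologicalSpace.SeparableSpace S] [MeasurableSpace S] [BorelSpace S]
    (a b : EReal) (f : ℝ → EReal) (hf : IsF1 a b f) (hfa : AdmissibleF f)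
    (hbdd : ∃ m : ℝ, ∀ y : ℝ, (m : EReal) ≤ fstar f y)
    (c : S × S → ℝ≥0∞) (L : ℝ) (hL : 0 < L)
    (Q P : Measure S) [IsProbabilityMeasure Q] [IsProbabilityMeasure P] :
    fGammaDiv f (LipbL S c L) Q P
      = ⨆ g ∈ {g : S → ℝ | g ∈ LipL S c L ∧ Integrable g Q},
          (((∫ x, g x ∂Q : ℝ) : EReal) - LambdaF f P g) := by
  obtain ⟨m₀, hm₀⟩ := hbdd
  set m' : ℝ := min m₀ 0 with hm'def
  have hm' : ∀ y : ℝ, (m' : EReal) ≤ fstar f y := fun y =>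
    le_trans (EReal.coe_le_coe_iff.2 (min_le_left _ _)) (hm₀ y)
  have hne_top : ∀ y, fstar f y ≠ ⊤ := hfa.1
  have hge : ∀ y : ℝ, (y : EReal) ≤ fstar f y := by
    intro y
    have h1 : ((((1:ℝ) * y : ℝ) : EReal) - f 1) ≤ fstar f y :=
      le_iSup (fun x : ℝ => (((x * y : ℝ) : EReal) - f x)) 1
    simpa [hf.at_one, one_mul] using h1
  have hne_bot : ∀ y, fstar f y ≠ ⊥ := fun y =>
    ((EReal.bot_lt_coe y).trans_le (hge y)).ne'
  set φ : ℝ → ℝ := fun y => (fstar f y).toReal with hφdef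
  have hφcoe : ∀ y, ((φ y : ℝ) : EReal) = fstar f y := fun y =>
    EReal.coe_toReal (hne_top y) (hne_bot y)
  have hφm : ∀ y, m' ≤ φ y := by
    intro y
    have := hm' y
    rw [← hφcoe y, EReal.coe_le_coe_iff] at this
    exact this
  have hquasi : ∀ u v w : ℝ, v ≤ u → u ≤ w → φ u ≤ max (φ v) (φ w) := by
    intro u v w hv hw
    have key : fstar f u ≤ max (fstar f v) (fstar f w) := by
      refine iSup_le fun x => ?_
      rcases le_total 0 x with hx | hx
      · calc (((x * u : ℝ) : EReal) - f x) ≤ (((x * w : ℝ) : EReal) - f x) :=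
              EReal.sub_le_sub (EReal.coe_le_coe_iff.2 (mul_le_mul_of_nonneg_left hw hx)) le_rfl
          _ ≤ fstar f w := le_iSup (fun x : ℝ => (((x * w : ℝ) : EReal) - f x)) x
          _ ≤ _ := le_max_right _ _
      · calc (((x * u : ℝ) : EReal) - f x) ≤ (((x * v : ℝ) : EReal) - f x) :=
              EReal.sub_le_sub (EReal.coe_le_coe_iff.2 (mul_le_mul_of_nonpos_left hv hx)) le_rfl
          _ ≤ fstar f v := le_iSup (fun x : ℝ => (((x * v : ℝ) : EReal) - f x)) x
          _ ≤ _ := le_max_left _ _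
    rcases le_total (φ v) (φ w) with hvw | hvw
    · rw [max_eq_right hvw]
      have : fstar f v ≤ fstar f w := by
        rw [← hφcoe v, ← hφcoe w]; exact_mod_cast hvw
      rw [max_eq_right this, ← hφcoe u, ← hφcoe w] at key
      exact_mod_cast key
    · rw [max_eq_left hvw]
      have : fstar f w ≤ fstar f v := by
        rw [← hφcoe v, ← hφcoe w]; exact_mod_cast hvw
      rw [max_eq_left this, ← hφcoe u, ← hφcoe v] at key
      exact_mod_cast key
  have hφmeas : Measurable φ := by
    refine measurable_of_Iic fun t => ?_
    have : OrdConnected (φ ⁻¹' Set.Iic t) := by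
      refine ⟨fun v hv w hw u hu => ?_⟩
      exact le_trans (hquasi u v w hu.1 hu.2) (max_le hv hw)
    exact this.measurableSet
  apply le_antisymm
  · -- easy direction: LipbL ⊆ LipL ∩ L¹(Q)
    refine iSup₂_le fun g hg => ?_
    obtain ⟨⟨hgc, C, hC⟩, hglip⟩ := hg
    have hmem : g ∈ {g : S → ℝ | g ∈ LipL S c L ∧ Integrable g Q} := by
      refine ⟨⟨hgc, hglip⟩, ?_⟩
      refine (integrable_const C).mono' hgc.aestronglyMeasurable ?_
      exact Filter.Eventually.of_forall fun x => by simpa [Real.norm_eq_abs] using hC x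
    exact le_biSup (fun g => ((∫ x, g x ∂Q : ℝ) : EReal) - LambdaF f P g) hmem
  · refine iSup₂_le fun g hg => ?_
    obtain ⟨⟨hgc, hglip⟩, hgint⟩ := hg
    set cQ : ℝ := ∫ x, g x ∂Q with hcQ
    refine ereal_le_of_forall_lt_le fun r hr => ?_
    -- pick ν almost achieving the infimum
    have hΛlt : LambdaF f P g < ((cQ - r : ℝ) : EReal) := ereal_lt_sub_aux hr
    rw [LambdaF, iInf_lt_iff] at hΛlt
    obtain ⟨ν, hν⟩ := hΛlt
    set ψ : S → ℝ := fun x => φ (g x - ν) with hψdef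
    have hψmeas : Measurable ψ := hφmeas.comp ((hgc.measurable).sub_const ν)
    have hψlb : ∀ x, m' ≤ ψ x := fun x => hφm _
    have hrw : (fun x => fstar f (g x - ν)) = fun x => ((ψ x : ℝ) : EReal) := by
      funext x; rw [hφcoe]
    have heI_ne_top : eIntegral P (fun x => fstar f (g x - ν)) ≠ ⊤ := by
      intro htop
      rw [htop] at hν
      rw [EReal.add_top_iff_ne_bot.2 (EReal.coe_ne_bot ν)] at hν
      exact absurd hν (by simp)
    rw [hrw] at heI_ne_top hν
    have hψint : Integrable ψ P := integrable_of_eIntegral_ne_top P ψ hψmeas hψlb heI_ne_top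
    rw [eIntegral_coe P ψ hψint] at hν
    set K : ℝ := ∫ x, ψ x ∂P with hK
    have hνK : ν + K < cQ - r := by
      rw [← EReal.coe_add, EReal.coe_lt_coe_iff] at hν
      exact hν
    -- the truncation sequence
    set G : ℕ → S → ℝ := fun n x => max (-(n : ℝ)) (min (n : ℝ) (g x)) with hG
    have hGcont : ∀ n, Continuous (G n) :=
      fun n => continuous_const.max (continuous_const.min hgc)
    have hGlb : ∀ n x, min (g x) 0 ≤ G n x := by
      intro n x
      rcases le_total 0 (g x) with h | h
      · refine le_trans (min_le_right _ _) (le_trans ?_ (le_max_right _ _))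
        exact le_min (Nat.cast_nonneg n) h
      · refine le_trans (min_le_left _ _) (le_trans ?_ (le_max_right _ _))
        exact le_min_iff.2 ⟨h.trans (Nat.cast_nonneg n), le_rfl⟩
    have hGub : ∀ n x, G n x ≤ max (g x) 0 := by
      intro n x
      refine max_le ?_ ?_
      · exact le_trans (neg_nonpos.2 (Nat.cast_nonneg n)) (le_max_right _ _)
      · exact le_trans (min_le_right _ _) (le_max_left _ _)
    have hGabs : ∀ n x, |G n x| ≤ |g x| := by
      intro n x
      rw [abs_le]
      constructor
      · exact le_trans (le_min (neg_abs_le _) (neg_nonpos.2 (abs_nonneg _))) (hGlb n x)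
      · exact le_trans (hGub n x) (max_le (le_abs_self _) (abs_nonneg _))
    have hGbd : ∀ n x, |G n x| ≤ (n : ℝ) := by
      intro n x
      rw [abs_le]
      exact ⟨le_max_left _ _, max_le (le_trans (neg_nonpos.2 (Nat.cast_nonneg n))
        (Nat.cast_nonneg n)) (min_le_left _ _)⟩
    have hGlip : ∀ n x y, |G n x - G n y| ≤ |g x - g y| := by
      intro n x y
      calc |G n x - G n y| ≤ |min (n:ℝ) (g x) - min (n:ℝ) (g y)| := by
            simp only [hG]
            rw [max_comm (-(n:ℝ)) (min (n:ℝ) (g x)), max_comm (-(n:ℝ)) (min (n:ℝ) (g y))]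
            exact abs_max_sub_max_le_abs _ _ _
        _ ≤ max |(n:ℝ) - (n:ℝ)| |g x - g y| := abs_min_sub_min_le_max _ _ _ _
        _ ≤ |g x - g y| := by simp
    have hGmem : ∀ n, G n ∈ LipbL S c L := by
      intro n
      refine ⟨⟨hGcont n, (n : ℝ), fun x => hGbd n x⟩, fun x y => ?_⟩
      exact le_trans (ENNReal.ofReal_le_ofReal (hGlip n x y)) (hglip x y)
    -- eventual equality G n x = g x
    have hGev : ∀ x : S, ∀ n : ℕ, |g x| ≤ (n : ℝ) → G n x = g x := by
      intro x n hn
      have h1 : min (n : ℝ) (g x) = g x := min_eq_right ((le_abs_self _).trans hn)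
      rw [hG]
      simp only [h1]
      exact max_eq_right (le_trans (neg_le_neg hn) (by simpa using neg_abs_le (g x)))
    have hGtend : ∀ x : S, Filter.Tendsto (fun n => G n x) Filter.atTop (nhds (g x)) := by
      intro x
      refine Filter.Tendsto.congr' ?_ tendsto_const_nhds
      filter_upwards [Filter.eventually_atTop.2 ⟨⌈|g x|⌉₊, fun n hn => hn⟩] with n hn
      exact (hGev x n ((Nat.ceil_le.1 hn))).symm
    -- bounds for ψn
    set ψn : ℕ → S → ℝ := fun n x => φ (G n x - ν) with hψn
    have hψnmeas : ∀ n, Measurable (ψn n) :=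
      fun n => hφmeas.comp (((hGcont n).measurable).sub_const ν)
    have hψnub : ∀ n x, ψn n x ≤ max (ψ x) (φ (-ν)) := by
      intro n x
      have hb : min (g x - ν) (-ν) ≤ G n x - ν := by
        rcases le_total (g x) 0 with h | h
        · have : min (g x - ν) (-ν) ≤ g x - ν := min_le_left _ _
          calc min (g x - ν) (-ν) ≤ min (g x) 0 - ν := by
                rcases le_total (g x) (0:ℝ) with h' | h'
                · simpa [min_eq_left h'] using min_le_left (g x - ν) (-ν)
                · simpa [min_eq_right h'] using min_le_right (g x - ν) (-ν)
            _ ≤ G n x - ν := sub_le_sub_right (hGlb n x) ν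
        · calc min (g x - ν) (-ν) ≤ min (g x) 0 - ν := by
                rcases le_total (g x) (0:ℝ) with h' | h'
                · simpa [min_eq_left h'] using min_le_left (g x - ν) (-ν)
                · simpa [min_eq_right h'] using min_le_right (g x - ν) (-ν)
            _ ≤ G n x - ν := sub_le_sub_right (hGlb n x) ν
      have ht : G n x - ν ≤ max (g x - ν) (-ν) := by
        calc G n x - ν ≤ max (g x) 0 - ν := sub_le_sub_right (hGub n x) ν
          _ ≤ max (g x - ν) (-ν) := by
                rcases le_total (g x) (0:ℝ) with h' | h'
                · simpa [max_eq_right h'] using le_max_right (g x - ν) (-ν)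
                · simpa [max_eq_left h'] using le_max_left (g x - ν) (-ν)
      have := hquasi (G n x - ν) (min (g x - ν) (-ν)) (max (g x - ν) (-ν)) hb ht
      refine le_trans this ?_
      rcases le_total (g x - ν) (-ν) with h' | h'
      · rw [min_eq_left h', max_eq_right h']
      · rw [min_eq_right h', max_eq_left h', max_comm]
    have hψnbd : ∀ n x, |ψn n x| ≤ |m'| + (|ψ x| + |φ (-ν)|) := by
      intro n x
      rw [abs_le]
      constructor
      · have : -(|m'| + (|ψ x| + |φ (-ν)|)) ≤ -|m'| := by
          have : (0:ℝ) ≤ |ψ x| + |φ (-ν)| := by positivity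
          linarith
        exact le_trans this (le_trans (neg_abs_le m') (hφm _))
      · refine le_trans (hψnub n x) ?_
        have h1 : ψ x ≤ |ψ x| := le_abs_self _
        have h2 : φ (-ν) ≤ |φ (-ν)| := le_abs_self _
        have h3 : (0:ℝ) ≤ |m'| := abs_nonneg _
        have h4 : (0:ℝ) ≤ |ψ x| := abs_nonneg _
        have h5 : (0:ℝ) ≤ |φ (-ν)| := abs_nonneg _
        exact max_le (by linarith) (by linarith)
    have hbound_int : Integrable (fun x => |m'| + (|ψ x| + |φ (-ν)|)) P :=
      (integrable_const _).add (hψint.abs.add (integrable_const _))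
    have hψnint : ∀ n, Integrable (ψn n) P := by
      intro n
      refine hbound_int.mono' (hψnmeas n).aestronglyMeasurable ?_
      exact Filter.Eventually.of_forall fun x => by simpa [Real.norm_eq_abs] using hψnbd n x
    have hGint : ∀ n, Integrable (G n) Q := by
      intro n
      refine hgint.abs.mono' (hGcont n).measurable.aestronglyMeasurable ?_
      exact Filter.Eventually.of_forall fun x => by
        simpa [Real.norm_eq_abs] using (hGabs n x).trans (le_abs_self _)
    -- convergence of integrals
    have htendQ : Filter.Tendsto (fun n => ∫ x, G n x ∂Q) Filter.atTop (nhds cQ) := by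
      refine tendsto_integral_of_dominated_convergence (fun x => |g x|)
        (fun n => (hGcont n).measurable.aestronglyMeasurable) hgint.abs ?_ ?_
      · exact fun n => Filter.Eventually.of_forall fun x => by
          simpa [Real.norm_eq_abs] using hGabs n x
      · exact Filter.Eventually.of_forall hGtend
    have htendP : Filter.Tendsto (fun n => ∫ x, ψn n x ∂P) Filter.atTop (nhds K) := by
      refine tendsto_integral_of_dominated_convergence (fun x => |m'| + (|ψ x| + |φ (-ν)|))
        (fun n => (hψnmeas n).aestronglyMeasurable) hbound_int ?_ ?_
      · exact fun n => Filter.Eventually.of_forall fun x => by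
          simpa [Real.norm_eq_abs] using hψnbd n x
      · refine Filter.Eventually.of_forall fun x => ?_
        refine Filter.Tendsto.congr' ?_ tendsto_const_nhds
        filter_upwards [Filter.eventually_atTop.2 ⟨⌈|g x|⌉₊, fun n hn => hn⟩] with n hn
        rw [hψn]
        simp only [hGev x n (Nat.ceil_le.1 hn)]
        rfl
    have htend : Filter.Tendsto (fun n => (∫ x, G n x ∂Q) - (ν + ∫ x, ψn n x ∂P))
        Filter.atTop (nhds (cQ - (ν + K))) :=
      htendQ.sub (tendsto_const_nhds.add htendP)
    have hev : ∀ᶠ n in Filter.atTop, r < (∫ x, G n x ∂Q) - (ν + ∫ x, ψn n x ∂P) :=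
      htend.eventually (eventually_gt_nhds (by linarith))
    obtain ⟨n, hn⟩ := hev.exists
    -- conclude
    have hterm : (((∫ x, G n x ∂Q : ℝ) : EReal) - LambdaF f P (G n))
        ≤ fGammaDiv f (LipbL S c L) Q P :=
      le_biSup (fun g => ((∫ x, g x ∂Q : ℝ) : EReal) - LambdaF f P g) (hGmem n)
    have hΛn : LambdaF f P (G n) ≤ ((ν + ∫ x, ψn n x ∂P : ℝ) : EReal) := by
      have h1 : LambdaF f P (G n) ≤ (ν : EReal) + eIntegral P (fun x => fstar f (G n x - ν)) :=
        iInf_le _ ν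
      have h2 : eIntegral P (fun x => fstar f (G n x - ν))
          = ((∫ x, ψn n x ∂P : ℝ) : EReal) := by
        have : (fun x => fstar f (G n x - ν)) = fun x => ((ψn n x : ℝ) : EReal) := by
          funext x; rw [hφcoe]
        rw [this, eIntegral_coe P (ψn n) (hψnint n)]
      rw [h2] at h1
      rw [EReal.coe_add]
      exact h1
    have : ((r : ℝ) : EReal) ≤ (((∫ x, G n x ∂Q : ℝ) : EReal) - LambdaF f P (G n)) := by
      calc ((r : ℝ) : EReal)
          ≤ (((∫ x, G n x ∂Q) - (ν + ∫ x, ψn n x ∂P) : ℝ) : EReal) :=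
            EReal.coe_le_coe_iff.2 hn.le
        _ = ((∫ x, G n x ∂Q : ℝ) : EReal) - ((ν + ∫ x, ψn n x ∂P : ℝ) : EReal) :=
            EReal.coe_sub _ _
        _ ≤ _ := EReal.sub_le_sub le_rfl hΛn
    exact this.trans hterm
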